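/- Let (Ω,𝓕,ℙ) be a probability space, fix x₀ ∈ ℝ^N, and let {x_k}_{k≥1} be random vectors in ℝ^N. Let φ : ℝ^N → ℝ be nonnegative and measurable, set ξ_k = φ(x_k) (so ξ₀ = φ(x₀) is a constant), assume each ξ_k is integrable and that ξ_{k+1} ≤ ξ_k almost surely for every k ≥ 0. Let α, β ≥ 0, c₂ > 0 with αc₂ < 1 ≤ (1+α)c₂, let ρ ∈ (0,1), and let ε satisfy βc₂/(ρ(1 − αc₂)) < ε < ξ₀. Suppose that for every k ≥ 0, almost surely on the event {ξ_k ≥ ε}, the conditional expectation satisfies E[ξ_{k+1} | σ(x_k)] ≤ (1 + α − 1/c₂)ξ_k + β. Then for every natural number K with K ≥ (c₂/(1 − αc₂)) · log((ξ₀ − βc₂/(1 − αc₂))/(ερ − βc₂/(1 − αc₂))), one has ℙ(ξ_K ≤ ε) ≥ 1 − ρ. -/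

import Mathlib

open MeasureTheory

/-- Auxiliary analytic lemma: linear recursion bound. -/
lemma aux_recursion_bound (q B ξ₀ β : ℝ) (hq0 : 0 ≤ q) (hβB : β = B * (1 - q))
    (u : ℕ → ℝ) (hu0 : u 0 = ξ₀) (hrec : ∀ k, u (k + 1) ≤ q * u k + β) :
    ∀ k, u k ≤ q ^ k * (ξ₀ - B) + B := by
  intro k
  induction k with
  | zero => simp [hu0]
  | succ n ih =>
    calc u (n + 1) ≤ q * u n + β := hrec n
      _ ≤ q * (q ^ n * (ξ₀ - B) + B) + β := by nlinarith
      _ = q ^ (n + 1) * (ξ₀ - B) + (q * B + β) := by ring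
      _ = q ^ (n + 1) * (ξ₀ - B) + B := by rw [hβB]; ring

/-- Theorem 1(ii) of the paper: high-probability iteration complexity for a nonnegative,
nonincreasing stochastic process satisfying, on the event `{ξ_k ≥ ε}`, the one-step
inequality `E[ξ_{k+1} | σ(x_k)] ≤ (1 + α − 1/c₂)ξ_k + β`. -/
theorem iteration_complexity_linear
    {N : ℕ} {Ω : Type*} [MeasurableSpace Ω] (μ : Measure Ω) [IsProbabilityMeasure μ]
    (x0 : Fin N → ℝ) (X : ℕ → Ω → Fin N → ℝ)
    (hXmeas : ∀ k, Measurable (X k)) (hX0 : ∀ ω, X 0 ω = x0)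
    (φ : (Fin N → ℝ) → ℝ) (hφmeas : Measurable φ) (hφnonneg : ∀ v, 0 ≤ φ v)
    (hint : ∀ k, Integrable (fun ω => φ (X k ω)) μ)
    (hmono : ∀ k, ∀ᵐ ω ∂μ, φ (X (k + 1) ω) ≤ φ (X k ω))
    (α β : ℝ) (hα : 0 ≤ α) (hβ : 0 ≤ β) (c₂ : ℝ) (hc₂ : 0 < c₂)
    (hαc₂ : α * c₂ < 1) (hc₂' : 1 ≤ (1 + α) * c₂)
    (ρ : ℝ) (hρ : ρ ∈ Set.Ioo (0 : ℝ) 1) (ε : ℝ)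
    (hεlow : β * c₂ / (ρ * (1 - α * c₂)) < ε) (hεup : ε < φ x0)
    (hcond : ∀ k, ∀ᵐ ω ∂μ, ε ≤ φ (X k ω) →
      (μ[fun ω' => φ (X (k + 1) ω') |
          MeasurableSpace.comap (X k) MeasurableSpace.pi]) ω ≤
        (1 + α - 1 / c₂) * φ (X k ω) + β)
    (K : ℕ)
    (hK : c₂ / (1 - α * c₂) *
        Real.log ((φ x0 - β * c₂ / (1 - α * c₂)) / (ε * ρ - β * c₂ / (1 - α * c₂))) ≤ K) :
    ENNReal.ofReal (1 - ρ) ≤ μ {ω | φ (X K ω) ≤ ε} := by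
  obtain ⟨hρ0, hρ1⟩ := hρ
  have hαpos : 0 < 1 - α * c₂ := by linarith
  have hc₂ne : c₂ ≠ 0 := hc₂.ne'
  obtain ⟨q, hqdef⟩ : ∃ q : ℝ, q = 1 + α - 1 / c₂ := ⟨_, rfl⟩
  have hq0 : 0 ≤ q := by
    have h1 : 1 / c₂ ≤ 1 + α := by rw [div_le_iff₀ hc₂]; linarith
    rw [hqdef]; linarith
  have hq1 : q < 1 := by
    have h1 : α < 1 / c₂ := (lt_div_iff₀ hc₂).2 (by linarith)
    rw [hqdef]; linarith
  have h1q : 1 - q = (1 - α * c₂) / c₂ := by rw [hqdef]; field_simp; ring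
  obtain ⟨B, hBdef⟩ : ∃ B : ℝ, B = β * c₂ / (1 - α * c₂) := ⟨_, rfl⟩
  have hBq : β = B * (1 - q) := by rw [h1q, hBdef]; field_simp; rw [eq_div_iff (by intro h; nlinarith)]
  have hB0 : 0 ≤ B := by rw [hBdef]; exact div_nonneg (mul_nonneg hβ hc₂.le) hαpos.le
  have hε0 : 0 < ε := lt_of_le_of_lt (by positivity) hεlow
  have hBερ : B < ε * ρ := by
    rw [div_lt_iff₀ (by positivity)] at hεlow
    rw [hBdef, div_lt_iff₀ hαpos]
    nlinarith
  have hεB : 0 < ε * ρ - B := by linarith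
  have hx0B : ε * ρ - B < φ x0 - B := by nlinarith
  have hx0Bpos : 0 < φ x0 - B := by linarith
  have hfmeas : ∀ k, Measurable (fun ω => φ (X k ω)) := fun k => hφmeas.comp (hXmeas k)
  have hAmeas : ∀ k, MeasurableSet {ω | ε ≤ φ (X k ω)} :=
    fun k => measurableSet_le measurable_const (hfmeas k)
  -- one-step recursion for u k = ∫_{A k} ξ_k
  have key : ∀ k, ∫ ω in {ω | ε ≤ φ (X (k + 1) ω)}, φ (X (k + 1) ω) ∂μ ≤
      q * ∫ ω in {ω | ε ≤ φ (X k ω)}, φ (X k ω) ∂μ + β := by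
    intro k
    have hmle : MeasurableSpace.comap (X k) MeasurableSpace.pi ≤ ‹MeasurableSpace Ω› :=
      (hXmeas k).comap_le
    have hAm : MeasurableSet[MeasurableSpace.comap (X k) MeasurableSpace.pi]
        {ω | ε ≤ φ (X k ω)} :=
      ⟨{v | ε ≤ φ v}, measurableSet_le measurable_const hφmeas, rfl⟩
    have step1 : ∫ ω in {ω | ε ≤ φ (X (k + 1) ω)}, φ (X (k + 1) ω) ∂μ ≤
        ∫ ω in {ω | ε ≤ φ (X k ω)}, φ (X (k + 1) ω) ∂μ := by
      apply setIntegral_mono_set ((hint (k + 1)).integrableOn)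
        (Filter.Eventually.of_forall fun ω => hφnonneg _)
      filter_upwards [hmono k] with ω hω hω'
      exact le_trans hω' hω
    have step2 : ∫ ω in {ω | ε ≤ φ (X k ω)}, φ (X (k + 1) ω) ∂μ
        = ∫ ω in {ω | ε ≤ φ (X k ω)},
            (μ[fun ω' => φ (X (k + 1) ω') |
              MeasurableSpace.comap (X k) MeasurableSpace.pi]) ω ∂μ :=
      (setIntegral_condExp hmle (hint (k + 1)) hAm).symm
    have step3 : ∫ ω in {ω | ε ≤ φ (X k ω)},
          (μ[fun ω' => φ (X (k + 1) ω') |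
            MeasurableSpace.comap (X k) MeasurableSpace.pi]) ω ∂μ
        ≤ ∫ ω in {ω | ε ≤ φ (X k ω)}, (q * φ (X k ω) + β) ∂μ := by
      apply setIntegral_mono_on_ae (integrable_condExp.integrableOn)
        (((hint k).const_mul q |>.add (integrable_const β)).integrableOn) (hAmeas k)
      filter_upwards [hcond k] with ω hω hωA
      rw [hqdef]
      exact hω hωA
    have step4 : ∫ ω in {ω | ε ≤ φ (X k ω)}, (q * φ (X k ω) + β) ∂μ ≤
        q * ∫ ω in {ω | ε ≤ φ (X k ω)}, φ (X k ω) ∂μ + β := by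
      rw [integral_add ((hint k).const_mul q |>.integrableOn)
          (integrable_const β |>.integrableOn),
        integral_const_mul, setIntegral_const, smul_eq_mul, Measure.real]
      have hle : (μ {ω | ε ≤ φ (X k ω)}).toReal ≤ 1 := by
        have h := prob_le_one (μ := μ) (s := {ω | ε ≤ φ (X k ω)})
        simpa using ENNReal.toReal_mono (by simp) h
      nlinarith
    calc ∫ ω in {ω | ε ≤ φ (X (k + 1) ω)}, φ (X (k + 1) ω) ∂μ ≤ _ := step1
      _ = _ := step2
      _ ≤ _ := step3
      _ ≤ _ := step4
  -- initial value
  have hu0 : ∫ ω in {ω | ε ≤ φ (X 0 ω)}, φ (X 0 ω) ∂μ = φ x0 := by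
    have hA0 : {ω | ε ≤ φ (X 0 ω)} = Set.univ := by
      ext ω; simp only [Set.mem_setOf_eq, Set.mem_univ, iff_true, hX0]
      exact hεup.le
    rw [hA0, setIntegral_univ]
    have h1 : (fun ω => φ (X 0 ω)) = fun _ => φ x0 := by funext ω; rw [hX0]
    rw [h1, integral_const]
    simp
  -- inductive bound
  have ubound : ∫ ω in {ω | ε ≤ φ (X K ω)}, φ (X K ω) ∂μ ≤ q ^ K * (φ x0 - B) + B :=
    aux_recursion_bound q B (φ x0) β hq0 hBq
      (fun k => ∫ ω in {ω | ε ≤ φ (X k ω)}, φ (X k ω) ∂μ) hu0 key K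
  -- bound on q^K
  have hqK : q ^ K * (φ x0 - B) + B ≤ ε * ρ := by
    have hr0 : 0 < (ε * ρ - B) / (φ x0 - B) := div_pos hεB hx0Bpos
    have hgoal : q ^ K ≤ (ε * ρ - B) / (φ x0 - B) := by
      have h1q' : 0 < 1 - q := by linarith
      have hKlog : Real.log ((φ x0 - B) / (ε * ρ - B)) ≤ K * (1 - q) := by
        have hC : c₂ / (1 - α * c₂) = 1 / (1 - q) := by
          rw [h1q]; field_simp
        rw [hC, ← hBdef] at hK
        calc Real.log ((φ x0 - B) / (ε * ρ - B))
            = (1 / (1 - q) * Real.log ((φ x0 - B) / (ε * ρ - B))) * (1 - q) := by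
              field_simp
          _ ≤ K * (1 - q) := mul_le_mul_of_nonneg_right hK h1q'.le
      rcases eq_or_lt_of_le hq0 with hq | hq
      · -- q = 0
        have hK1 : 1 ≤ K := by
          by_contra h
          push_neg at h
          interval_cases K
          simp only [Nat.cast_zero, zero_mul] at hKlog
          have : 0 < Real.log ((φ x0 - B) / (ε * ρ - B)) :=
            Real.log_pos ((one_lt_div hεB).2 hx0B)
          linarith
        rw [← hq, zero_pow (by omega)]
        exact hr0.le
      · -- q > 0
        have h1 : Real.log q ≤ q - 1 := Real.log_le_sub_one_of_pos hq
        have h2 : (K : ℝ) * Real.log q ≤ Real.log ((ε * ρ - B) / (φ x0 - B)) := by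
          rw [Real.log_div hx0Bpos.ne' hεB.ne'] at hKlog
          rw [Real.log_div hεB.ne' hx0Bpos.ne']
          have hK0 : (0 : ℝ) ≤ K := Nat.cast_nonneg K
          nlinarith
        calc q ^ K = Real.exp ((K : ℝ) * Real.log q) := by
              rw [Real.exp_nat_mul, Real.exp_log hq]
          _ ≤ Real.exp (Real.log ((ε * ρ - B) / (φ x0 - B))) := Real.exp_le_exp.2 h2
          _ = (ε * ρ - B) / (φ x0 - B) := Real.exp_log hr0
    calc q ^ K * (φ x0 - B) + B ≤ (ε * ρ - B) / (φ x0 - B) * (φ x0 - B) + B := by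
          nlinarith
      _ = ε * ρ := by rw [div_mul_cancel₀ _ hx0Bpos.ne']; ring
  -- Markov inequality
  have hSmeas : MeasurableSet {ω | ε < φ (X K ω)} :=
    measurableSet_lt measurable_const (hfmeas K)
  have hmarkov : ε * (μ {ω | ε < φ (X K ω)}).toReal ≤
      ∫ ω in {ω | ε ≤ φ (X K ω)}, φ (X K ω) ∂μ := by
    have h1 : ε * (μ {ω | ε < φ (X K ω)}).toReal = ∫ _ in {ω | ε < φ (X K ω)}, ε ∂μ := by
      rw [setIntegral_const, smul_eq_mul, Measure.real]; ring
    rw [h1]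
    calc ∫ _ in {ω | ε < φ (X K ω)}, ε ∂μ
        ≤ ∫ ω in {ω | ε < φ (X K ω)}, φ (X K ω) ∂μ := by
          apply setIntegral_mono_on (integrable_const ε |>.integrableOn)
            ((hint K).integrableOn) hSmeas
          intro ω hω; exact le_of_lt hω
      _ ≤ ∫ ω in {ω | ε ≤ φ (X K ω)}, φ (X K ω) ∂μ := by
          apply setIntegral_mono_set ((hint K).integrableOn)
            (Filter.Eventually.of_forall fun ω => hφnonneg _)
          exact Filter.Eventually.of_forall fun ω hω => le_of_lt hω
  have hμS : (μ {ω | ε < φ (X K ω)}).toReal ≤ ρ := by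
    have h1 : ε * (μ {ω | ε < φ (X K ω)}).toReal ≤ ε * ρ :=
      le_trans hmarkov (le_trans ubound hqK)
    exact le_of_mul_le_mul_left h1 hε0
  -- conclude
  have hcompl : {ω | φ (X K ω) ≤ ε} = {ω | ε < φ (X K ω)}ᶜ := by
    ext ω; simp [not_lt]
  rw [hcompl, prob_compl_eq_one_sub hSmeas]
  have hμS' : μ {ω | ε < φ (X K ω)} ≤ ENNReal.ofReal ρ := by
    rw [ENNReal.le_ofReal_iff_toReal_le (measure_ne_top μ _) hρ0.le]
    exact hμS
  calc ENNReal.ofReal (1 - ρ) = 1 - ENNReal.ofReal ρ := by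
        rw [ENNReal.ofReal_sub 1 hρ0.le, ENNReal.ofReal_one]
    _ ≤ 1 - μ {ω | ε < φ (X K ω)} := tsub_le_tsub_left hμS' 1
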